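/- (Theorem 1, finite-sample form.) Let M, L ≥ 1 and let ζ : Fin M → Fin L → ℝ be such that for each l ∈ Fin L the map m ↦ ζ m l is injective (no ties within each column). Define r(m,l) = card {m' ∈ Fin M | ζ m' l ≤ ζ m l}, rmax(m) = max_{l ∈ Fin L} r(m,l), and for 1 ≤ r ≤ M let ζ^{(l)}_{(r)} denote the r-th smallest element of the multiset {ζ m' l | m' ∈ Fin M}. Let α ∈ (0,1), set k = ⌈(1−α)·M⌉, and let r_{1−α} be the k-th smallest element of the multiset {rmax(m) | m ∈ Fin M}. Define U(l) = ζ^{(l)}_{(r_{1−α})} for each l ∈ Fin L. Then the simultaneous upper limits U(l) have empirical coverage at least 1−α: card {m ∈ Fin M | ∀ l ∈ Fin L, ζ m l ≤ U(l)} ≥ (1−α)·M. -/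

import Mathlib

/-- The rank of draw `m` in column `l`: the number of draws in column `l`
(including `ζ m l` itself) that are at most `ζ m l`. -/
noncomputable def rank {M L : ℕ} (ζ : Fin M → Fin L → ℝ) (m : Fin M) (l : Fin L) : ℕ :=
  (Finset.univ.filter (fun m' => ζ m' l ≤ ζ m l)).card

/-- The maximal rank of draw `m` across all columns. -/
noncomputable def rmax {M L : ℕ} (ζ : Fin M → Fin L → ℝ) (m : Fin M) : ℕ :=
  Finset.univ.sup (fun l : Fin L => rank ζ m l)

/-- The `r`-th smallest element of the multiset of column-`l` values
`{ζ m' l | m' ∈ Fin M}` (for `1 ≤ r ≤ M`): the `(r-1)`-indexed entry of the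
sorted list of values. -/
noncomputable def orderStat {M L : ℕ} (ζ : Fin M → Fin L → ℝ) (l : Fin L) (r : ℕ) : ℝ :=
  ((Finset.univ.val.map (fun m' => ζ m' l)).sort (· ≤ ·)).getD (r - 1) 0

/-- The `k`-th smallest element of the multiset of values `{v m | m ∈ Fin M}`
(for `1 ≤ k ≤ M`): the `(k-1)`-indexed entry of the sorted list of values. -/
def kthSmallest {M : ℕ} (v : Fin M → ℕ) (k : ℕ) : ℕ :=
  ((Finset.univ.val.map v).sort (· ≤ ·)).getD (k - 1) 0

lemma sorted_getElem_le' {α : Type*} [LinearOrder α] (s : List α) (hs : s.Pairwise (· ≤ ·))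
    (i j : ℕ) (hj : j < s.length) (hij : i ≤ j) : s[i]'(lt_of_le_of_lt hij hj) ≤ s[j] := by
  rcases Nat.lt_or_ge i j with h | h
  · exact (List.pairwise_iff_getElem.mp hs) i j (by omega) hj h
  · have : i = j := by omega
    simp [this]

lemma countP_sorted_ge' {α : Type*} [LinearOrder α] (s : List α) (hs : s.Pairwise (· ≤ ·))
    (i : ℕ) (hi : i < s.length) :
    i + 1 ≤ s.countP (fun x => decide (x ≤ s[i])) := by
  have hsub : List.Sublist (s.take (i+1)) s := List.take_sublist _ _
  have hlen : (s.take (i+1)).length = i + 1 := by rw [List.length_take]; omega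
  have hall : ∀ x ∈ s.take (i+1), x ≤ s[i] := by
    intro x hx
    obtain ⟨j, hj, hget⟩ := List.mem_iff_getElem.mp hx
    rw [List.getElem_take] at hget
    subst hget
    exact sorted_getElem_le' s hs j i hi (by rw [hlen] at hj; omega)
  calc i + 1 = (s.take (i+1)).countP (fun x => decide (x ≤ s[i])) := by
        rw [List.countP_eq_length.mpr (by intro x hx; simpa using hall x hx), hlen]
      _ ≤ s.countP _ := hsub.countP_le

lemma card_filter_eq_countP' {M : ℕ} {α : Type*} [LinearOrder α] (f : Fin M → α) (t : α) :
    (Finset.univ.filter (fun m => f m ≤ t)).card =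
      ((Finset.univ.val.map f).sort (· ≤ ·)).countP (fun x => decide (x ≤ t)) := by
  rw [← Multiset.coe_countP, Multiset.sort_eq, Multiset.countP_map]
  simp [Finset.card_filter, Finset.filter, Multiset.countP_eq_card_filter]

lemma rank_pos' {M L : ℕ} (ζ : Fin M → Fin L → ℝ) (m : Fin M) (l : Fin L) :
    1 ≤ rank ζ m l :=
  Finset.card_pos.mpr ⟨m, by simp⟩

lemma rank_le' {M L : ℕ} (ζ : Fin M → Fin L → ℝ) (m : Fin M) (l : Fin L) :
    rank ζ m l ≤ M := by
  simpa [rank] using Finset.card_filter_le Finset.univ (fun m' => ζ m' l ≤ ζ m l)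

/-- Key step: if `rank ζ m l ≤ r` and `1 ≤ r ≤ M`, then `ζ m l ≤ orderStat ζ l r`. -/
lemma le_orderStat' {M L : ℕ} (ζ : Fin M → Fin L → ℝ) (m : Fin M) (l : Fin L)
    (r : ℕ) (hrk : rank ζ m l ≤ r) (hr1 : 1 ≤ r) (hrM : r ≤ M) :
    ζ m l ≤ orderStat ζ l r := by
  set s := ((Finset.univ.val.map (fun m' => ζ m' l)).sort (· ≤ ·)) with hsdef
  have hs : s.Pairwise (· ≤ ·) := Multiset.pairwise_sort _ _
  have hlen : s.length = M := by
    simp [hsdef]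
  have hidx : r - 1 < s.length := by omega
  have hOS : orderStat ζ l r = s[r-1] := by
    rw [orderStat, List.getD_eq_getElem _ _ hidx]
  rw [hOS]
  by_contra hcon
  push_neg at hcon
  -- ζ m l is in s
  have hmem : ζ m l ∈ s := by
    rw [hsdef, Multiset.mem_sort]
    exact Multiset.mem_map.mpr ⟨m, by simp⟩
  obtain ⟨i, hiL, hieq⟩ := List.mem_iff_getElem.mp hmem
  have hri : r - 1 < i := by
    by_contra h
    push_neg at h
    have := sorted_getElem_le' s hs i (r-1) hidx h
    rw [hieq] at this
    exact absurd (lt_of_le_of_lt this hcon) (lt_irrefl _)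
  have hcount : i + 1 ≤ s.countP (fun x => decide (x ≤ ζ m l)) := by
    have := countP_sorted_ge' s hs i hiL
    rwa [hieq] at this
  have hrank : rank ζ m l = s.countP (fun x => decide (x ≤ ζ m l)) :=
    card_filter_eq_countP' (fun m' => ζ m' l) (ζ m l)
  omega

/-- Theorem 1 (finite-sample form): with `k = ⌈(1-α)·M⌉`, `r_{1-α}` the `k`-th
smallest of the max ranks `rmax(m)`, and `U(l) = ζ^{(l)}_{(r_{1-α})}`, the
simultaneous upper limits have empirical coverage at least `1 - α`:
`card {m | ∀ l, ζ m l ≤ U l} ≥ (1-α)·M`. -/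
theorem simultaneous_credible_coverage {M L : ℕ} (hM : 1 ≤ M) (hL : 1 ≤ L)
    (ζ : Fin M → Fin L → ℝ)
    (hζ : ∀ l : Fin L, Function.Injective (fun m => ζ m l))
    (α : ℝ) (hα : α ∈ Set.Ioo (0 : ℝ) 1) :
    ((Finset.univ.filter (fun m : Fin M =>
        ∀ l : Fin L, ζ m l ≤ orderStat ζ l (kthSmallest (rmax ζ) ⌈(1 - α) * M⌉₊))).card : ℝ) ≥
      (1 - α) * M := by
  obtain ⟨hα0, hα1⟩ := hα
  have hMpos : (0:ℝ) < M := by exact_mod_cast hM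
  have hpos : (0:ℝ) < (1 - α) * M := by
    have : (0:ℝ) < 1 - α := by linarith
    positivity
  set k := ⌈(1 - α) * M⌉₊ with hkdef
  have hk1 : 1 ≤ k := Nat.ceil_pos.mpr hpos
  have hkM : k ≤ M := by
    rw [hkdef]
    apply Nat.ceil_le.mpr
    nlinarith
  set s₀ := ((Finset.univ.val.map (rmax ζ)).sort (· ≤ ·)) with hs₀def
  have hs₀ : s₀.Pairwise (· ≤ ·) := Multiset.pairwise_sort _ _
  have hlen₀ : s₀.length = M := by simp [hs₀def]
  have hidx₀ : k - 1 < s₀.length := by omega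
  set r := kthSmallest (rmax ζ) k with hrdef
  have hget : r = s₀[k-1] := by
    rw [hrdef, kthSmallest, List.getD_eq_getElem _ _ hidx₀]
  -- bounds on r
  have hrmem : r ∈ s₀ := hget ▸ List.getElem_mem _
  obtain ⟨m₀, _, hm₀⟩ := Multiset.mem_map.mp (by rwa [hs₀def, Multiset.mem_sort] at hrmem)
  have hr1 : 1 ≤ r := by
    rw [← hm₀, rmax]
    calc 1 ≤ rank ζ m₀ ⟨0, hL⟩ := rank_pos' ζ m₀ ⟨0, hL⟩
      _ ≤ _ := Finset.le_sup (Finset.mem_univ _)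
  have hrM : r ≤ M := by
    rw [← hm₀, rmax]
    exact Finset.sup_le fun l _ => rank_le' ζ m₀ l
  -- at least k draws have rmax ≤ r
  have hcountA : k ≤ (Finset.univ.filter (fun m : Fin M => rmax ζ m ≤ r)).card := by
    rw [card_filter_eq_countP' (rmax ζ) r, ← hs₀def, hget]
    have := countP_sorted_ge' s₀ hs₀ (k-1) hidx₀
    omega
  -- subset
  have hsubset : (Finset.univ.filter (fun m : Fin M => rmax ζ m ≤ r)) ⊆
      (Finset.univ.filter (fun m : Fin M => ∀ l : Fin L, ζ m l ≤ orderStat ζ l r)) := by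
    intro m hm
    simp only [Finset.mem_filter, Finset.mem_univ, true_and] at hm ⊢
    intro l
    refine le_orderStat' ζ m l r ?_ hr1 hrM
    exact le_trans (Finset.le_sup (Finset.mem_univ l)) hm
  have hcard : k ≤ (Finset.univ.filter (fun m : Fin M =>
      ∀ l : Fin L, ζ m l ≤ orderStat ζ l r)).card :=
    le_trans hcountA (Finset.card_le_card hsubset)
  calc (1 - α) * M ≤ (k : ℝ) := Nat.le_ceil _
    _ ≤ _ := by exact_mod_cast hcard
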